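/- arXiv:0804.3074 — 6 statements merged into one kernel-verified Lean document; each statement's English description precedes it below -/
import Mathlib

section
/- For integers 0 ≤ k ≤ n, the (q,t)-binomial coefficient satisfies the Pascal-type relation: [n choose k]_{q,t} = [n-1 choose k-1]_{q,t^q} + t^{q^k-1} · (k!_{q,t^q} / k!_{q,t}) · [n-1 choose k]_{q,t^q}. -/
noncomputable section

/-- The (q,t)-factorial `k!_{q,t} = ∏_{i=0}^{k-1} (1 - t^{q^k - q^i})`, as a function of
`t` in the field of rational functions `ℚ(t)`. -/
def qtfact (q k : ℕ) (t : RatFunc ℚ) : RatFunc ℚ :=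
  ∏ i ∈ Finset.range k, (1 - t ^ (q ^ k - q ^ i))

/-- The (q,t)-binomial coefficient `[n choose k]_{q,t} = n!_{q,t}/(k!_{q,t} · (n-k)!_{q,t^{q^k}})`,
with the convention that it vanishes outside the range `0 ≤ k ≤ n`. -/
def qtbinom (q n : ℕ) (k : ℤ) (t : RatFunc ℚ) : RatFunc ℚ :=
  if 0 ≤ k ∧ k ≤ (n : ℤ) then
    qtfact q n t / (qtfact q k.toNat t * qtfact q (n - k.toNat) (t ^ q ^ k.toNat))
  else 0

lemma X_pow_ne_one (m : ℕ) (hm : 1 ≤ m) : (RatFunc.X : RatFunc ℚ) ^ m ≠ 1 := by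
  intro h
  rw [← RatFunc.algebraMap_X, ← map_pow, ← map_one (algebraMap (Polynomial ℚ) (RatFunc ℚ))] at h
  have h2 := RatFunc.algebraMap_injective ℚ h
  have := congrArg Polynomial.natDegree h2
  simp [Polynomial.natDegree_X_pow] at this
  omega

lemma one_sub_X_pow_ne_zero (m : ℕ) (hm : 1 ≤ m) :
    (1 : RatFunc ℚ) - RatFunc.X ^ m ≠ 0 :=
  sub_ne_zero.mpr (Ne.symm (X_pow_ne_one m hm))

lemma qtfact_ne_zero (q m s : ℕ) (hq : 2 ≤ q) (hs : 1 ≤ s) :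
    qtfact q m (RatFunc.X ^ s) ≠ 0 := by
  unfold qtfact
  rw [Finset.prod_ne_zero_iff]
  intro i hi
  rw [← pow_mul]
  apply one_sub_X_pow_ne_zero
  have h1 : q ^ i < q ^ m := Nat.pow_lt_pow_right hq (Finset.mem_range.mp hi)
  have h2 : 1 ≤ q ^ m - q ^ i := by omega
  exact Nat.one_le_iff_ne_zero.mpr (by positivity)

lemma qtfact_X_ne_zero (q m : ℕ) (hq : 2 ≤ q) : qtfact q m RatFunc.X ≠ 0 := by
  have := qtfact_ne_zero q m 1 hq le_rfl
  rwa [pow_one] at this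

lemma qtfact_zero (q : ℕ) (t : RatFunc ℚ) : qtfact q 0 t = 1 := by
  simp [qtfact]

lemma qtfact_succ (q m : ℕ) (t : RatFunc ℚ) :
    qtfact q (m + 1) t = (1 - t ^ (q ^ (m + 1) - 1)) * qtfact q m (t ^ q) := by
  unfold qtfact
  rw [Finset.prod_range_succ', mul_comm]
  simp only [pow_zero]
  congr 1
  refine Finset.prod_congr rfl fun i _ => ?_
  rw [← pow_mul]
  congr 1
  rw [Nat.mul_sub, pow_succ, pow_succ]
  ring_nf

/-- First (q,t)-Pascal relation:
`[n choose k]_{q,t} = [n-1 choose k-1]_{q,t^q} + t^{q^k-1} · (k!_{q,t^q}/k!_{q,t}) · [n-1 choose k]_{q,t^q}`. -/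
theorem qt_pascal_first (q n k : ℕ) (hq : 2 ≤ q) (hk : k ≤ n) :
    qtbinom q n (k : ℤ) RatFunc.X =
      qtbinom q (n - 1) ((k : ℤ) - 1) (RatFunc.X ^ q) +
        RatFunc.X ^ (q ^ k - 1) * (qtfact q k (RatFunc.X ^ q) / qtfact q k RatFunc.X) *
          qtbinom q (n - 1) (k : ℤ) (RatFunc.X ^ q) := by
  rcases Nat.eq_zero_or_pos k with hk0 | h1k
  · -- k = 0
    subst hk0
    rw [qtbinom, qtbinom, qtbinom, if_pos (by constructor <;> omega),
      if_neg (by omega), if_pos (by constructor <;> omega)]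
    simp only [Int.toNat_natCast, Nat.cast_zero, Int.toNat_zero, qtfact_zero, pow_zero,
      pow_one, Nat.sub_zero, one_mul, Nat.sub_self]
    rw [div_self (qtfact_X_ne_zero q n hq),
      div_self (qtfact_ne_zero q (n - 1) q hq (by omega))]
    simp
  rcases Nat.lt_or_ge k n with hlt | hge
  · -- 1 ≤ k < n : generic case
    have hkn : k + 1 ≤ n := hlt
    have hc1 : ((k : ℤ) - 1) = ((k - 1 : ℕ) : ℤ) := by omega
    rw [qtbinom, qtbinom, qtbinom, hc1, if_pos, if_pos, if_pos]
    · simp only [Int.toNat_natCast]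
      have e1 : (RatFunc.X ^ q : RatFunc ℚ) ^ q ^ (k - 1) = RatFunc.X ^ q ^ k := by
        rw [← pow_mul]; congr 1
        rw [← pow_succ']; congr 1; omega
      have e2 : (RatFunc.X ^ q : RatFunc ℚ) ^ q ^ k = RatFunc.X ^ q ^ (k + 1) := by
        rw [← pow_mul, ← pow_succ']
      have e3 : n - 1 - (k - 1) = n - k := by omega
      have e4 : n - 1 - k = n - k - 1 := by omega
      rw [e1, e2, e3, e4]
      have hqk1 : 2 ≤ q ^ k := le_trans hq (Nat.le_self_pow (by omega) q)
      have hqkn : q ^ k < q ^ n := Nat.pow_lt_pow_right hq (by omega)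
      have hqn1 : 1 ≤ q ^ n := by omega
      have hN : qtfact q n RatFunc.X
          = (1 - RatFunc.X ^ (q ^ n - 1)) * qtfact q (n - 1) (RatFunc.X ^ q) := by
        have h := qtfact_succ q (n - 1) RatFunc.X
        rw [show n - 1 + 1 = n by omega] at h
        exact h
      have hK : qtfact q k RatFunc.X
          = (1 - RatFunc.X ^ (q ^ k - 1)) * qtfact q (k - 1) (RatFunc.X ^ q) := by
        have h := qtfact_succ q (k - 1) RatFunc.X
        rw [show k - 1 + 1 = k by omega] at h
        exact h
      have hM : qtfact q (n - k) (RatFunc.X ^ q ^ k)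
          = (1 - RatFunc.X ^ (q ^ n - q ^ k)) * qtfact q (n - k - 1) (RatFunc.X ^ q ^ (k + 1)) := by
        have h := qtfact_succ q (n - k - 1) (RatFunc.X ^ q ^ k)
        rw [show n - k - 1 + 1 = n - k by omega] at h
        rw [h, ← pow_mul, ← pow_mul, Nat.mul_sub, mul_one, ← pow_add,
          show k + (n - k) = n from by omega, ← pow_succ]
      set A := qtfact q (n - 1) (RatFunc.X ^ q) with hA
      set K1 := qtfact q (k - 1) (RatFunc.X ^ q) with hK1
      set K' := qtfact q k (RatFunc.X ^ q) with hK'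
      set M1 := qtfact q (n - k - 1) (RatFunc.X ^ q ^ (k + 1)) with hM1
      rw [hN, hK, hM]
      have hK1ne : K1 ≠ 0 := qtfact_ne_zero q (k - 1) q hq (by omega)
      have hK'ne : K' ≠ 0 := qtfact_ne_zero q k q hq (by omega)
      have hM1ne : M1 ≠ 0 := qtfact_ne_zero q (n - k - 1) (q ^ (k + 1)) hq (Nat.one_le_pow _ _ (by omega))
      have hv : (1 : RatFunc ℚ) - RatFunc.X ^ (q ^ k - 1) ≠ 0 :=
        one_sub_X_pow_ne_zero _ (by omega)
      have hw : (1 : RatFunc ℚ) - RatFunc.X ^ (q ^ n - q ^ k) ≠ 0 :=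
        one_sub_X_pow_ne_zero _ (by omega)
      have hpow : (RatFunc.X : RatFunc ℚ) ^ (q ^ k - 1) * RatFunc.X ^ (q ^ n - q ^ k)
          = RatFunc.X ^ (q ^ n - 1) := by
        rw [← pow_add]; congr 1; omega
      have key : (1 : RatFunc ℚ) - RatFunc.X ^ (q ^ n - 1)
          = (1 - RatFunc.X ^ (q ^ k - 1))
            + RatFunc.X ^ (q ^ k - 1) * (1 - RatFunc.X ^ (q ^ n - q ^ k)) := by
        linear_combination hpow
      rw [key]
      field_simp
    · constructor <;> omega
    · constructor <;> omega
    · constructor <;> omega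
  · -- k = n ≥ 1
    have hkn : k = n := le_antisymm hk hge
    subst hkn
    have hc1 : ((k : ℤ) - 1) = ((k - 1 : ℕ) : ℤ) := by omega
    rw [qtbinom, qtbinom, qtbinom, hc1, if_pos (by constructor <;> omega),
      if_pos (by constructor <;> omega), if_neg (by omega)]
    simp only [Int.toNat_natCast, Nat.sub_self, qtfact_zero, mul_one, mul_zero, add_zero]
    rw [div_self (qtfact_X_ne_zero q k hq),
      div_self (qtfact_ne_zero q (k - 1) q hq (by omega))]
end
end

section
/- For every integer q ≥ 2 and all integers 0 ≤ k ≤ n, the rational function [n choose k]_{q,t} = ∏_{i=1}^{k} (1 - t^{q^n - q^{i-1}})/(1 - t^{q^k - q^{i-1}}) is a polynomial in t with nonnegative integer coefficients. -/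
noncomputable section

open Polynomial Finset

private lemma qt_geom_aux (q a : ℕ) :
    (∑ j ∈ Finset.range q, (X : ℚ[X]) ^ (j * a)) * (1 - X ^ a) = 1 - X ^ (q * a) := by
  have h := geom_sum_mul ((X : ℚ[X]) ^ a) q
  have hrw : ∀ j, (X : ℚ[X]) ^ (j * a) = (X ^ a) ^ j := fun j => by
    rw [← pow_mul, mul_comm]
  simp_rw [hrw]
  linear_combination -h

private lemma qt_exp_aux {q : ℕ} (hq : 2 ≤ q) (a i : ℕ) :
    q * (q ^ a - q ^ i) = q ^ (a + 1) - q ^ (i + 1) := by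
  rw [Nat.mul_sub, ← pow_succ', ← pow_succ']

private lemma qt_key (q : ℕ) (hq : 2 ≤ q) :
    ∀ n k : ℕ, k ≤ n → ∃ P : Polynomial ℕ,
      (P.map (Nat.castRingHom ℚ)) * ∏ i ∈ Finset.range k, (1 - (X : ℚ[X]) ^ (q ^ k - q ^ i)) =
        ∏ i ∈ Finset.range k, (1 - (X : ℚ[X]) ^ (q ^ n - q ^ i)) := by
  intro n
  induction n with
  | zero =>
    intro k hk
    interval_cases k
    exact ⟨1, by simp⟩
  | succ n ih =>
    intro k hk
    rcases Nat.eq_or_lt_of_le hk with heq | hlt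
    · subst heq; exact ⟨1, by simp⟩
    have hkn : k ≤ n := Nat.lt_succ_iff.mp hlt
    cases k with
    | zero => exact ⟨1, by simp⟩
    | succ m =>
      obtain ⟨P1, hP1⟩ := ih m (le_trans (Nat.le_succ m) hkn)
      obtain ⟨P2, hP2⟩ := ih (m + 1) hkn
      set p1 : ℚ[X] := (P1.map (Nat.castRingHom ℚ)).comp (X ^ q) with hp1def
      set p2 : ℚ[X] := (P2.map (Nat.castRingHom ℚ)).comp (X ^ q) with hp2def
      set G : ℚ[X] := ∏ i ∈ Finset.range (m + 1),
        ∑ j ∈ Finset.range q, (X : ℚ[X]) ^ (j * (q ^ (m + 1) - q ^ i)) with hGdef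
      refine ⟨P1.comp (X ^ q) + X ^ (q ^ (m + 1) - 1) * (P2.comp (X ^ q) *
        ∏ i ∈ Finset.range (m + 1),
          ∑ j ∈ Finset.range q, (X : Polynomial ℕ) ^ (j * (q ^ (m + 1) - q ^ i))), ?_⟩
      have hmap : ((P1.comp (X ^ q) + X ^ (q ^ (m + 1) - 1) * (P2.comp (X ^ q) *
          ∏ i ∈ Finset.range (m + 1), ∑ j ∈ Finset.range q,
            (X : Polynomial ℕ) ^ (j * (q ^ (m + 1) - q ^ i)))).map (Nat.castRingHom ℚ))
          = p1 + X ^ (q ^ (m + 1) - 1) * (p2 * G) := by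
        simp [Polynomial.map_add, Polynomial.map_mul, Polynomial.map_comp, Polynomial.map_pow,
          Polynomial.map_prod, Polynomial.map_sum, hp1def, hp2def, hGdef]
      rw [hmap]
      -- transformed hypotheses
      have hP1' : p1 * ∏ i ∈ Finset.range m, (1 - (X : ℚ[X]) ^ (q ^ (m + 1) - q ^ (i + 1))) =
          ∏ i ∈ Finset.range m, (1 - (X : ℚ[X]) ^ (q ^ (n + 1) - q ^ (i + 1))) := by
        have h := congrArg (fun r : ℚ[X] => r.comp (X ^ q)) hP1
        simp only [mul_comp, Polynomial.prod_comp, sub_comp, one_comp, pow_comp, X_comp, ← pow_mul] at h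
        simp only [qt_exp_aux hq] at h
        exact h
      have hP2' : p2 * ∏ i ∈ Finset.range (m + 1),
            (1 - (X : ℚ[X]) ^ (q ^ (m + 2) - q ^ (i + 1))) =
          ∏ i ∈ Finset.range (m + 1), (1 - (X : ℚ[X]) ^ (q ^ (n + 1) - q ^ (i + 1))) := by
        have h := congrArg (fun r : ℚ[X] => r.comp (X ^ q)) hP2
        simp only [mul_comp, Polynomial.prod_comp, sub_comp, one_comp, pow_comp, X_comp, ← pow_mul] at h
        simp only [qt_exp_aux hq] at h
        exact h
      have hG : G * ∏ i ∈ Finset.range (m + 1), (1 - (X : ℚ[X]) ^ (q ^ (m + 1) - q ^ i)) =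
          ∏ i ∈ Finset.range (m + 1), (1 - (X : ℚ[X]) ^ (q ^ (m + 2) - q ^ (i + 1))) := by
        rw [hGdef, ← Finset.prod_mul_distrib]
        refine Finset.prod_congr rfl fun i _ => ?_
        rw [qt_geom_aux, qt_exp_aux hq]
      set N' : ℚ[X] := ∏ i ∈ Finset.range m, (1 - (X : ℚ[X]) ^ (q ^ (n + 1) - q ^ (i + 1)))
        with hN'def
      have hsplitD : ∏ i ∈ Finset.range (m + 1), (1 - (X : ℚ[X]) ^ (q ^ (m + 1) - q ^ i)) =
          (∏ i ∈ Finset.range m, (1 - (X : ℚ[X]) ^ (q ^ (m + 1) - q ^ (i + 1)))) *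
            (1 - X ^ (q ^ (m + 1) - 1)) := by
        rw [Finset.prod_range_succ']
        norm_num
      have E1 : p1 * ∏ i ∈ Finset.range (m + 1), (1 - (X : ℚ[X]) ^ (q ^ (m + 1) - q ^ i)) =
          N' * (1 - X ^ (q ^ (m + 1) - 1)) := by
        rw [hsplitD, ← mul_assoc, hP1', hN'def]
      have E2 : p2 * (G * ∏ i ∈ Finset.range (m + 1), (1 - (X : ℚ[X]) ^ (q ^ (m + 1) - q ^ i))) =
          N' * (1 - X ^ (q ^ (n + 1) - q ^ (m + 1))) := by
        rw [hG]
        rw [show (∏ i ∈ Finset.range (m + 1), (1 - (X : ℚ[X]) ^ (q ^ (n + 1) - q ^ (i + 1)))) =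
          N' * (1 - X ^ (q ^ (n + 1) - q ^ (m + 1))) from by
            rw [Finset.prod_range_succ, hN'def]] at hP2'
        rw [hP2']
      have E3 : ∏ i ∈ Finset.range (m + 1), (1 - (X : ℚ[X]) ^ (q ^ (n + 1) - q ^ i)) =
          N' * (1 - X ^ (q ^ (n + 1) - 1)) := by
        rw [Finset.prod_range_succ', hN'def]
        norm_num
      have E4 : (X : ℚ[X]) ^ (q ^ (m + 1) - 1) * X ^ (q ^ (n + 1) - q ^ (m + 1)) =
          X ^ (q ^ (n + 1) - 1) := by
        rw [← pow_add]
        congr 1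
        have h1 : 1 ≤ q ^ (m + 1) := Nat.one_le_pow _ _ (by omega)
        have h2 : q ^ (m + 1) ≤ q ^ (n + 1) :=
          Nat.pow_le_pow_right (by omega) (by omega)
        omega
      linear_combination E1 + X ^ (q ^ (m + 1) - 1) * E2 - E3 - N' * E4

/-- For every integer `q ≥ 2` and `0 ≤ k ≤ n`, the (q,t)-binomial coefficient
`[n choose k]_{q,t} = ∏_{i=1}^{k} (1 - t^{q^n - q^{i-1}})/(1 - t^{q^k - q^{i-1}})`
is a polynomial in `t` with nonnegative integer coefficients. -/
theorem qtbinom_is_polynomial_with_nonneg_int_coeffs (q n k : ℕ) (hq : 2 ≤ q) (hk : k ≤ n) :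
    ∃ p : Polynomial ℚ, (∀ i, ∃ m : ℕ, p.coeff i = (m : ℚ)) ∧
      algebraMap (Polynomial ℚ) (RatFunc ℚ) p =
        ∏ i ∈ Finset.range k,
          (1 - (RatFunc.X : RatFunc ℚ) ^ (q ^ n - q ^ i)) / (1 - RatFunc.X ^ (q ^ k - q ^ i)) := by
  obtain ⟨P, hP⟩ := qt_key q hq n k hk
  refine ⟨P.map (Nat.castRingHom ℚ), fun i => ⟨P.coeff i, by simp [Polynomial.coeff_map]⟩, ?_⟩
  have hden : ∀ i ∈ Finset.range k, (1 - (RatFunc.X : RatFunc ℚ) ^ (q ^ k - q ^ i)) ≠ 0 := by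
    intro i hi
    rw [Finset.mem_range] at hi
    have hc : q ^ k - q ^ i ≠ 0 := by
      have : q ^ i < q ^ k := Nat.pow_lt_pow_right (by omega) hi
      omega
    have hpoly : (1 : ℚ[X]) - X ^ (q ^ k - q ^ i) ≠ 0 := by
      intro h
      have := congrArg (Polynomial.eval 0) h
      simp [zero_pow hc] at this
    have := RatFunc.algebraMap_ne_zero (K := ℚ) hpoly
    simpa [RatFunc.algebraMap_X] using this
  rw [Finset.prod_div_distrib, eq_div_iff (Finset.prod_ne_zero_iff.mpr hden)]
  have h := congrArg (algebraMap (Polynomial ℚ) (RatFunc ℚ)) hP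
  simpa [map_mul, map_prod, map_sub, map_one, map_pow, RatFunc.algebraMap_X] using h

end
end

section
/- The quotient of (q,t)-factorials factors as k!_{q,t^q} / k!_{q,t} = ∏_{i=0}^{k-1} [q]_{t^{q^k - q^i}}, where [N]_s := (1-s^N)/(1-s) = 1 + s + ... + s^{N-1}. In particular, for integers q ≥ 2 this quotient is a polynomial in t with nonnegative coefficients. -/
noncomputable section

open Finset Polynomial

/-- `[N]_s := (1 - s^N)/(1 - s)`. -/
def qint (N : ℕ) (s : RatFunc ℚ) : RatFunc ℚ := (1 - s ^ N) / (1 - s)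

lemma one_sub_X_pow_ne (n : ℕ) (hn : 1 ≤ n) :
    (1 - (RatFunc.X : RatFunc ℚ) ^ n) ≠ 0 := by
  have h : (1 - (RatFunc.X : RatFunc ℚ) ^ n)
      = algebraMap (Polynomial ℚ) (RatFunc ℚ) (1 - Polynomial.X ^ n) := by
    simp [RatFunc.algebraMap_X]
  rw [h]
  intro hz
  rw [show (0 : RatFunc ℚ) = algebraMap (Polynomial ℚ) (RatFunc ℚ) 0 from (map_zero _).symm] at hz
  have hz2 := RatFunc.algebraMap_injective ℚ hz
  have := congrArg (fun p => Polynomial.coeff p n) hz2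
  simp [Polynomial.coeff_one, Nat.one_le_iff_ne_zero.mp hn] at this

lemma coeff_nonneg_prod {s : Finset ℕ} {f : ℕ → Polynomial ℚ}
    (h : ∀ i ∈ s, ∀ n, 0 ≤ (f i).coeff n) :
    ∀ n, 0 ≤ (∏ i ∈ s, f i).coeff n := by
  classical
  induction s using Finset.induction_on with
  | empty => intro n; simp [Polynomial.coeff_one]; split <;> norm_num
  | @insert a s hx ih =>
    intro n
    rw [Finset.prod_insert hx, Polynomial.coeff_mul]
    refine Finset.sum_nonneg fun p _ => mul_nonneg ?_ ?_
    · exact h a (Finset.mem_insert_self a s) _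
    · exact ih (fun i hi m => h i (Finset.mem_insert_of_mem hi) m) _

/-- The quotient of (q,t)-factorials factors as
`k!_{q,t^q} / k!_{q,t} = ∏_{i=0}^{k-1} [q]_{t^{q^k - q^i}}`; in particular for integers `q ≥ 2`
it is a polynomial in `t` with nonnegative coefficients. -/
theorem qtfact_quotient_factorization (q k : ℕ) (hq : 2 ≤ q) :
    qtfact q k (RatFunc.X ^ q) / qtfact q k RatFunc.X =
        ∏ i ∈ Finset.range k, qint q ((RatFunc.X : RatFunc ℚ) ^ (q ^ k - q ^ i)) ∧
      ∃ p : Polynomial ℚ, (∀ i, 0 ≤ p.coeff i) ∧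
        algebraMap (Polynomial ℚ) (RatFunc ℚ) p =
          qtfact q k (RatFunc.X ^ q) / qtfact q k RatFunc.X := by
  have hn : ∀ i ∈ Finset.range k, 1 ≤ q ^ k - q ^ i := by
    intro i hi
    have : q ^ i < q ^ k :=
      Nat.pow_lt_pow_right (by omega) (Finset.mem_range.mp hi)
    omega
  have key : qtfact q k (RatFunc.X ^ q) / qtfact q k RatFunc.X =
      ∏ i ∈ Finset.range k, qint q ((RatFunc.X : RatFunc ℚ) ^ (q ^ k - q ^ i)) := by
    unfold qtfact qint
    rw [← Finset.prod_div_distrib]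
    refine Finset.prod_congr rfl fun i hi => ?_
    congr 1
    rw [← pow_mul, ← pow_mul, Nat.mul_comm]
  refine ⟨key, ?_⟩
  refine ⟨∏ i ∈ Finset.range k, ∑ j ∈ Finset.range q,
      Polynomial.X ^ ((q ^ k - q ^ i) * j), ?_, ?_⟩
  · apply coeff_nonneg_prod
    intro i _ n
    rw [Polynomial.finset_sum_coeff]
    refine Finset.sum_nonneg fun j _ => ?_
    rw [Polynomial.coeff_X_pow]
    split <;> norm_num
  · rw [key, map_prod]
    refine Finset.prod_congr rfl fun i hi => ?_
    rw [map_sum]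
    have hne : (RatFunc.X : RatFunc ℚ) ^ (q ^ k - q ^ i) ≠ 1 := by
      intro h
      exact one_sub_X_pow_ne _ (hn i hi) (by rw [h]; ring)
    rw [qint]
    have := geom_sum_eq hne q
    calc (∑ j ∈ Finset.range q,
          algebraMap (Polynomial ℚ) (RatFunc ℚ) (Polynomial.X ^ ((q ^ k - q ^ i) * j)))
        = ∑ j ∈ Finset.range q, ((RatFunc.X : RatFunc ℚ) ^ (q ^ k - q ^ i)) ^ j := by
          refine Finset.sum_congr rfl fun j _ => ?_
          rw [map_pow, RatFunc.algebraMap_X, ← pow_mul]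
      _ = _ := by
          rw [this, ← neg_div_neg_eq]; ring_nf
end
end

section
/- For integers n ≥ k ≥ 0 and q ≥ 2, the principal specialization of Macdonald's Schur analogue for one-row shapes satisfies H_{n-k}(1, t, t^2, ..., t^k) = [n choose k]_{q,t}, where H_r(x_1,...,x_{k+1}) := det((x_i^{q^{α_j}}))/det((x_i^{q^{n-j}})) with α = (r+k, k-1, k-2, ..., 1, 0). -/
noncomputable section

open Finset

private lemma Xpow_injective {a b : ℕ} (h : (RatFunc.X : RatFunc ℚ) ^ a = RatFunc.X ^ b) :
    a = b := by
  have h2 : (algebraMap (Polynomial ℚ) (RatFunc ℚ)) (Polynomial.X ^ a)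
      = (algebraMap (Polynomial ℚ) (RatFunc ℚ)) (Polynomial.X ^ b) := by
    simpa [map_pow, RatFunc.algebraMap_X] using h
  have h3 := RatFunc.algebraMap_injective ℚ h2
  calc a = (Polynomial.X ^ a : Polynomial ℚ).natDegree := (Polynomial.natDegree_X_pow a).symm
    _ = (Polynomial.X ^ b : Polynomial ℚ).natDegree := by rw [h3]
    _ = b := Polynomial.natDegree_X_pow b

private lemma Xpow_ne {a b : ℕ} (h : a ≠ b) :
    (RatFunc.X : RatFunc ℚ) ^ a ≠ RatFunc.X ^ b := fun he => h (Xpow_injective he)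

/-- For integers `n ≥ k ≥ 0` and `q ≥ 2`, the principal specialization of Macdonald's Schur
analogue for the one-row shape `(n-k)` in `k+1` variables satisfies
`H_{n-k}(1, t, …, t^k) = [n choose k]_{q,t}`.  Here `H_r = S_{(r)}` is the bialternant
`det((t^{i-1})^{q^{λ_j + m - j}}) / det((t^{i-1})^{q^{m-j}})` with `m = k+1` and
`λ = (n-k, 0, …, 0)`, so the exponents in column `j` (0-indexed) are `q^n` for `j = 0`
and `q^{k-j}` otherwise. -/
theorem qt_homogeneous_principal_specialization (q n k : ℕ) (hq : 2 ≤ q) (hk : k ≤ n) :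
    Matrix.det (Matrix.of fun i j : Fin (k + 1) =>
        (RatFunc.X : RatFunc ℚ) ^ ((i : ℕ) * q ^ (if (j : ℕ) = 0 then n else k - (j : ℕ))))
      / Matrix.det (Matrix.of fun i j : Fin (k + 1) =>
        (RatFunc.X : RatFunc ℚ) ^ ((i : ℕ) * q ^ (k - (j : ℕ))))
      = ∏ i ∈ Finset.range k,
          (1 - (RatFunc.X : RatFunc ℚ) ^ (q ^ n - q ^ i)) / (1 - RatFunc.X ^ (q ^ k - q ^ i)) := by
  have hq1 : 1 < q := hq
  set t : RatFunc ℚ := RatFunc.X with ht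
  set v : Fin (k + 1) → RatFunc ℚ :=
    fun j => t ^ (q ^ (if (j : ℕ) = 0 then n else k - (j : ℕ))) with hv
  set w : Fin (k + 1) → RatFunc ℚ := fun j => t ^ (q ^ (k - (j : ℕ))) with hw
  -- the two matrices are transposes of Vandermonde matrices
  have hdet1 : Matrix.det (Matrix.of fun i j : Fin (k + 1) =>
      t ^ ((i : ℕ) * q ^ (if (j : ℕ) = 0 then n else k - (j : ℕ))))
      = ∏ i : Fin (k + 1), ∏ j ∈ Ioi i, (v j - v i) := by
    rw [← Matrix.det_vandermonde v, ← Matrix.det_transpose]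
    congr 1
    ext i j
    simp [Matrix.vandermonde, hv, ← pow_mul, mul_comm]
  have hdet2 : Matrix.det (Matrix.of fun i j : Fin (k + 1) =>
      t ^ ((i : ℕ) * q ^ (k - (j : ℕ))))
      = ∏ i : Fin (k + 1), ∏ j ∈ Ioi i, (w j - w i) := by
    rw [← Matrix.det_vandermonde w, ← Matrix.det_transpose]
    congr 1
    ext i j
    simp [Matrix.vandermonde, hw, ← pow_mul, mul_comm]
  rw [hdet1, hdet2, Fin.prod_univ_succ, Fin.prod_univ_succ]
  -- the tails agree
  have htail : (∏ i : Fin k, ∏ j ∈ Ioi (i.succ), (v j - v (i.succ)))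
      = ∏ i : Fin k, ∏ j ∈ Ioi (i.succ), (w j - w (i.succ)) := by
    refine Finset.prod_congr rfl fun i _ => Finset.prod_congr rfl fun j hj => ?_
    have hj0 : (j : ℕ) ≠ 0 := by
      have : (i.succ : Fin (k + 1)) < j := Finset.mem_Ioi.mp hj
      have : (0 : Fin (k + 1)) < j := lt_of_le_of_lt (Fin.zero_le _) this
      exact fun h => this.ne' (Fin.ext h)
    have hi0 : ((i.succ : Fin (k + 1)) : ℕ) ≠ 0 := by simp
    simp [hv, hw, hj0, hi0, show j ≠ 0 from fun h => hj0 (by simp [h])]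
  rw [htail]
  set P : RatFunc ℚ := ∏ i : Fin k, ∏ j ∈ Ioi (i.succ), (w j - w i.succ) with hP
  have hPne : P ≠ 0 := by
    rw [hP]
    refine Finset.prod_ne_zero_iff.mpr fun i _ => Finset.prod_ne_zero_iff.mpr fun j hj => ?_
    have hlt : (i.succ : Fin (k + 1)) < j := Finset.mem_Ioi.mp hj
    have hltn : ((i.succ : Fin (k+1)) : ℕ) < (j : ℕ) := hlt
    refine sub_ne_zero.mpr (Xpow_ne ?_)
    intro he
    have := Nat.pow_right_injective hq he
    have hjk : (j : ℕ) ≤ k := Nat.lt_succ_iff.mp j.isLt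
    omega
  rw [mul_div_mul_right _ _ hPne]
  -- first-column products
  have hv0 : v 0 = t ^ (q ^ n) := by simp [hv]
  have hw0 : w 0 = t ^ (q ^ k) := by simp [hw]
  have hA : ∀ m : ℕ, (∏ j ∈ Ioi (0 : Fin (k + 1)), (w j - t ^ (q ^ m)))
      = ∏ i ∈ range k, (t ^ (q ^ i) - t ^ (q ^ m)) := by
    intro m
    rw [Fin.prod_Ioi_zero]
    have h1 : (∏ i : Fin k, (w i.succ - t ^ (q ^ m)))
        = ∏ i ∈ range k, (t ^ (q ^ (k - (i + 1))) - t ^ (q ^ m)) := by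
      rw [← Fin.prod_univ_eq_prod_range]
      exact Finset.prod_congr rfl fun i _ => by simp [hw]
    rw [h1, ← Finset.prod_range_reflect]
    refine Finset.prod_congr rfl fun i hi => ?_
    have hik : i < k := Finset.mem_range.mp hi
    congr 3
    omega
  have hveq : (∏ j ∈ Ioi (0 : Fin (k + 1)), (v j - v 0))
      = ∏ i ∈ range k, (t ^ (q ^ i) - t ^ (q ^ n)) := by
    rw [← hA n]
    refine Finset.prod_congr rfl fun j hj => ?_
    have hj0 : (j : ℕ) ≠ 0 := by
      have : (0 : Fin (k + 1)) < j := Finset.mem_Ioi.mp hj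
      exact fun h => this.ne' (Fin.ext h)
    simp [hv, hw, hj0, show j ≠ 0 from fun h => hj0 (by simp [h])]
  have hweq : (∏ j ∈ Ioi (0 : Fin (k + 1)), (w j - w 0))
      = ∏ i ∈ range k, (t ^ (q ^ i) - t ^ (q ^ k)) := by
    rw [← hA k]
    exact Finset.prod_congr rfl fun j hj => by rw [hw0]
  rw [hveq, hweq]
  -- now the pure product identity
  rw [Finset.prod_div_distrib]
  have hfac : ∀ m : ℕ, k ≤ m → (∏ i ∈ range k, (t ^ (q ^ i) - t ^ (q ^ m)))
      = (∏ i ∈ range k, t ^ (q ^ i)) * ∏ i ∈ range k, (1 - t ^ (q ^ m - q ^ i)) := by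
    intro m hm
    rw [← Finset.prod_mul_distrib]
    refine Finset.prod_congr rfl fun i hi => ?_
    have hik : i < k := Finset.mem_range.mp hi
    have hle : q ^ i ≤ q ^ m := Nat.pow_le_pow_right (by omega) (by omega)
    rw [mul_sub, mul_one, ← pow_add]
    congr 2
    omega
  rw [hfac n hk, hfac k le_rfl]
  have hC : (∏ i ∈ range k, t ^ (q ^ i)) ≠ 0 :=
    Finset.prod_ne_zero_iff.mpr fun i _ => pow_ne_zero _ RatFunc.X_ne_zero
  exact mul_div_mul_left _ _ hC
end
end

section
/- For integers n ≥ r ≥ 0 and q ≥ 2, the principal specialization of Macdonald's elementary analogue satisfies E_r(1, t, ..., t^{n-1}) = [n choose n-r]_{q,t} · ∏_{i=1}^{r} (t^{q^n} - t^{q^{n-r+i-1}})/(t^{q^{n-r+i}} - t^{q^{n-r}}). -/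
noncomputable section

open Finset Matrix

namespace QtAux

abbrev K : Type := RatFunc ℚ

lemma Xpow_inj : Function.Injective fun k : ℕ => (RatFunc.X : K) ^ k := by
  intro a b hab
  have h1 : (algebraMap (Polynomial ℚ) K) (Polynomial.X ^ a)
      = (algebraMap (Polynomial ℚ) K) (Polynomial.X ^ b) := by
    rw [map_pow, map_pow, RatFunc.algebraMap_X]; exact hab
  have h2 := RatFunc.algebraMap_injective ℚ h1
  calc a = (Polynomial.X ^ a : Polynomial ℚ).natDegree := (Polynomial.natDegree_X_pow a).symm
    _ = (Polynomial.X ^ b : Polynomial ℚ).natDegree := by rw [h2]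
    _ = b := Polynomial.natDegree_X_pow b

lemma X_sub_ne {a b : ℕ} (h : a ≠ b) : (RatFunc.X : K) ^ a - RatFunc.X ^ b ≠ 0 := by
  rw [sub_ne_zero]
  exact fun hc => h (Xpow_inj hc)

lemma one_sub_ne {k : ℕ} (h : k ≠ 0) : (1 : K) - RatFunc.X ^ k ≠ 0 := by
  rw [sub_ne_zero]
  intro hc
  have h0 : (0 : ℕ) = k := Xpow_inj (by simpa using hc)
  exact h h0.symm

/-- the increasing enumeration of `{0,…} \ {s}`. -/
def hfun (s j : ℕ) : ℕ := if j < s then j else j + 1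

lemma Vsucc {M : Type*} [CommMonoid M] (F : ℕ → ℕ → M) (m : ℕ) :
    ∏ i ∈ range (m+1), ∏ j ∈ Ioo i (m+1), F i j
      = (∏ i ∈ range m, ∏ j ∈ Ioo i m, F i j) * ∏ i ∈ range m, F i m := by
  rw [Finset.prod_range_succ]
  have h0 : Ioo m (m+1) = (∅ : Finset ℕ) := by ext x; simp
  rw [h0, Finset.prod_empty, mul_one, ← Finset.prod_mul_distrib]
  refine Finset.prod_congr rfl fun i hi => ?_
  rw [Finset.mem_range] at hi
  have h1 : Ioo i (m+1) = insert m (Ioo i m) := by ext x; simp; omega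
  rw [h1, Finset.prod_insert (by simp), mul_comm]

lemma insert1 {M : Type*} [CommMonoid M] (G : ℕ → M) {s m : ℕ} (hs : s ≤ m) :
    (∏ i ∈ range m, G (hfun s i)) * G s = ∏ i ∈ range (m+1), G i := by
  obtain ⟨d, rfl⟩ : ∃ d, m = s + d := ⟨m - s, by omega⟩
  rw [show s + d + 1 = s + (d + 1) from by omega]
  rw [Finset.prod_range_add G s (d+1), Finset.prod_range_add (fun i => G (hfun s i)) s d,
    Finset.prod_range_succ' (fun i => G (s + i)) d]
  have e1 : ∏ i ∈ range s, G (hfun s i) = ∏ i ∈ range s, G i :=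
    Finset.prod_congr rfl fun i hi => by
      rw [Finset.mem_range] at hi; rw [hfun, if_pos hi]
  have e2 : ∏ i ∈ range d, G (hfun s (s + i)) = ∏ i ∈ range d, G (s + (i + 1)) :=
    Finset.prod_congr rfl fun i _ => by
      rw [hfun, if_neg (by omega)]
      congr 1
  rw [e1, e2, add_zero, mul_assoc]

lemma insertI {M : Type*} [CommMonoid M] (F : ℕ → ℕ → M) (s : ℕ) :
    ∀ m, s ≤ m →
    (∏ i ∈ range m, ∏ j ∈ Ioo i m, F (hfun s i) (hfun s j))
      * ((∏ i ∈ range s, F i s) * ∏ b ∈ Ioo s (m+1), F s b)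
    = ∏ i ∈ range (m+1), ∏ j ∈ Ioo i (m+1), F i j := by
  intro m
  induction m with
  | zero =>
    intro hs
    have h0 : s = 0 := by omega
    subst h0
    have h1 : Ioo 0 1 = (∅ : Finset ℕ) := by ext x; simp; omega
    simp [h1]
  | succ m ih =>
    intro hs
    rcases Nat.lt_or_ge m s with hcase | hcase
    · -- s = m + 1
      have hsm : s = m + 1 := by omega
      subst hsm
      have e1 : ∏ i ∈ range (m+1), ∏ j ∈ Ioo i (m+1), F (hfun (m+1) i) (hfun (m+1) j)
          = ∏ i ∈ range (m+1), ∏ j ∈ Ioo i (m+1), F i j := by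
        refine Finset.prod_congr rfl fun i hi => ?_
        refine Finset.prod_congr rfl fun j hj => ?_
        rw [Finset.mem_range] at hi; rw [Finset.mem_Ioo] at hj
        rw [hfun, if_pos hi, hfun, if_pos hj.2]
      have e2 : Ioo (m+1) (m+1+1) = (∅ : Finset ℕ) := by ext x; simp
      rw [e1, e2, Finset.prod_empty, mul_one, Vsucc F (m+1)]
    · -- s ≤ m
      have hm : hfun s m = m + 1 := by rw [hfun, if_neg (by omega)]
      have step := Vsucc (fun a b => F (hfun s a) (hfun s b)) m
      rw [hm] at step
      rw [step]
      have e3 : Ioo s (m+1+1) = insert (m+1) (Ioo s (m+1)) := by ext x; simp; omega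
      rw [e3, Finset.prod_insert (by simp), Vsucc F (m+1), ← ih hcase]
      rw [← insert1 (fun a => F a (m+1)) hcase]
      simp only [mul_comm, mul_left_comm, mul_assoc]

lemma fin_double {M : Type*} [CommMonoid M] (F : ℕ → ℕ → M) (n : ℕ) :
    (∏ i : Fin n, ∏ j ∈ Finset.Ioi i, F (i : ℕ) (j : ℕ))
      = ∏ i ∈ range n, ∏ j ∈ Ioo i n, F i j := by
  rw [← Fin.prod_univ_eq_prod_range (fun k => ∏ j ∈ Ioo k n, F k j) n]
  refine Finset.prod_congr rfl fun i _ => ?_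
  have hn : (i : ℕ) < n := i.isLt
  have h1 : (Ioo (i : ℕ) n : Finset ℕ) = Ioc (i : ℕ) (n - 1) := by
    ext x; simp only [Finset.mem_Ioo, Finset.mem_Ioc]; omega
  rw [← Fin.map_valEmbedding_Ioi, Finset.prod_map]
  rfl

lemma det_eq (q n : ℕ) (u : ℕ → ℕ) :
    Matrix.det (Matrix.of fun i j : Fin n => (RatFunc.X : K) ^ ((i : ℕ) * q ^ u (j : ℕ)))
      = ∏ i ∈ range n, ∏ j ∈ Ioo i n,
          ((RatFunc.X : K) ^ q ^ u j - RatFunc.X ^ q ^ u i) := by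
  have hm : (Matrix.of fun i j : Fin n => (RatFunc.X : K) ^ ((i : ℕ) * q ^ u (j : ℕ)))
      = (Matrix.vandermonde fun j : Fin n => (RatFunc.X : K) ^ q ^ u (j : ℕ))ᵀ := by
    ext i j
    rw [Matrix.transpose_apply, Matrix.vandermonde_apply, Matrix.of_apply, mul_comm, pow_mul]
  rw [hm, Matrix.det_transpose, Matrix.det_vandermonde]
  exact fin_double (fun a b => (RatFunc.X : K) ^ q ^ u b - RatFunc.X ^ q ^ u a) n

lemma core (q n r s : ℕ) (hr : r ≤ n) (hs : s = n - r) :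
    (∏ i ∈ range n, ∏ j ∈ Ioo i n,
        ((RatFunc.X : K) ^ q ^ hfun s j - RatFunc.X ^ q ^ hfun s i))
      * ((∏ i ∈ range s, ((RatFunc.X : K) ^ q ^ s - RatFunc.X ^ q ^ i))
          * ∏ i ∈ range r, ((RatFunc.X : K) ^ q ^ (s + i + 1) - RatFunc.X ^ q ^ s))
    = (∏ i ∈ range n, ∏ j ∈ Ioo i n, ((RatFunc.X : K) ^ q ^ j - RatFunc.X ^ q ^ i))
      * ((∏ i ∈ range s, ((RatFunc.X : K) ^ q ^ n - RatFunc.X ^ q ^ i))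
          * ∏ i ∈ range r, ((RatFunc.X : K) ^ q ^ n - RatFunc.X ^ q ^ (s + i))) := by
  have key := insertI (fun a b => (RatFunc.X : K) ^ q ^ b - RatFunc.X ^ q ^ a) s n (by omega)
  rw [Vsucc (fun a b => (RatFunc.X : K) ^ q ^ b - RatFunc.X ^ q ^ a) n] at key
  have e1 : (∏ b ∈ Ioo s (n+1), ((RatFunc.X : K) ^ q ^ b - RatFunc.X ^ q ^ s))
      = ∏ i ∈ range r, ((RatFunc.X : K) ^ q ^ (s + i + 1) - RatFunc.X ^ q ^ s) := by
    have h1 : Ioo s (n+1) = Ico (s+1) (n+1) := by ext x; simp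
    rw [h1, Finset.prod_Ico_eq_prod_range]
    have h2 : n + 1 - (s + 1) = r := by omega
    rw [h2]
    refine Finset.prod_congr rfl fun i _ => ?_
    rw [show s + 1 + i = s + i + 1 from by omega]
  have e2 : (∏ a ∈ range n, ((RatFunc.X : K) ^ q ^ n - RatFunc.X ^ q ^ a))
      = (∏ a ∈ range s, ((RatFunc.X : K) ^ q ^ n - RatFunc.X ^ q ^ a))
        * ∏ i ∈ range r, ((RatFunc.X : K) ^ q ^ n - RatFunc.X ^ q ^ (s + i)) := by
    rw [show n = s + r from by omega]
    exact Finset.prod_range_add (fun a => (RatFunc.X : K) ^ q ^ (s+r) - RatFunc.X ^ q ^ a) s r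
  rw [e1, e2] at key
  linear_combination key

lemma factor_eq (q n s i : ℕ) (hq : 2 ≤ q) (hi : i < s) (hsn : s ≤ n) :
    (1 - (RatFunc.X : K) ^ (q ^ n - q ^ i)) / (1 - RatFunc.X ^ (q ^ s - q ^ i))
      = ((RatFunc.X : K) ^ q ^ n - RatFunc.X ^ q ^ i)
        / ((RatFunc.X : K) ^ q ^ s - RatFunc.X ^ q ^ i) := by
  have h1 : q ^ i < q ^ s := Nat.pow_lt_pow_right (by omega) hi
  have h2 : q ^ s ≤ q ^ n := Nat.pow_le_pow_right (by omega) hsn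
  have hd1 : (1 : K) - RatFunc.X ^ (q ^ s - q ^ i) ≠ 0 := one_sub_ne (by omega)
  have hd2 : (RatFunc.X : K) ^ q ^ s - RatFunc.X ^ q ^ i ≠ 0 :=
    X_sub_ne (fun hc => by omega)
  obtain ⟨A, hA⟩ : ∃ A, q ^ n = q ^ i + A := ⟨q ^ n - q ^ i, by omega⟩
  obtain ⟨B, hB⟩ : ∃ B, q ^ s = q ^ i + B := ⟨q ^ s - q ^ i, by omega⟩
  have hA' : q ^ n - q ^ i = A := by omega
  have hB' : q ^ s - q ^ i = B := by omega
  rw [div_eq_div_iff hd1 hd2, hA', hB', hA, hB, pow_add, pow_add]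
  ring

end QtAux

open QtAux Finset in
/-- For integers `n ≥ r ≥ 0` and `q ≥ 2`, the principal specialization of Macdonald's
elementary analogue `E_r = S_{(1^r)}` satisfies
`E_r(1, t, …, t^{n-1}) = [n choose n-r]_{q,t} · ∏_{i=1}^{r} (t^{q^n} - t^{q^{n-r+i-1}})/(t^{q^{n-r+i}} - t^{q^{n-r}})`.
Here `E_r` is given by the bialternant with `λ = (1^r)`, so the exponent in column `j`
(0-indexed) is `q^{(if j < r then 1 else 0) + n - 1 - j}`. -/
theorem qt_elementary_principal_specialization (q n r : ℕ) (hq : 2 ≤ q) (hr : r ≤ n) :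
    Matrix.det (Matrix.of fun i j : Fin n =>
        (RatFunc.X : RatFunc ℚ) ^
          ((i : ℕ) * q ^ ((if (j : ℕ) < r then 1 else 0) + (n - 1 - (j : ℕ)))))
      / Matrix.det (Matrix.of fun i j : Fin n =>
        (RatFunc.X : RatFunc ℚ) ^ ((i : ℕ) * q ^ (n - 1 - (j : ℕ))))
      = (∏ i ∈ Finset.range (n - r),
          (1 - (RatFunc.X : RatFunc ℚ) ^ (q ^ n - q ^ i)) / (1 - RatFunc.X ^ (q ^ (n - r) - q ^ i)))
        * ∏ i ∈ Finset.range r,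
            ((RatFunc.X : RatFunc ℚ) ^ (q ^ n) - RatFunc.X ^ (q ^ (n - r + i)))
              / (RatFunc.X ^ (q ^ (n - r + i + 1)) - RatFunc.X ^ (q ^ (n - r))) := by
  classical
  set s := n - r with hs
  set σ : Equiv.Perm (Fin n) := Fin.revPerm with hσdef
  -- reverse the columns of the numerator matrix
  have hMnum : ((Matrix.of fun i j : Fin n =>
        (RatFunc.X : RatFunc ℚ) ^
          ((i : ℕ) * q ^ ((if (j : ℕ) < r then 1 else 0) + (n - 1 - (j : ℕ))))).submatrix
        id ⇑σ)
      = Matrix.of fun i j : Fin n =>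
          (RatFunc.X : RatFunc ℚ) ^ ((i : ℕ) * q ^ hfun s (j : ℕ)) := by
    ext i j
    simp only [Matrix.submatrix_apply, Matrix.of_apply, id, hσdef, Fin.revPerm_apply]
    have hj : (j : ℕ) < n := j.isLt
    have hrev : ((Fin.rev j : Fin n) : ℕ) = n - ((j : ℕ) + 1) := Fin.val_rev j
    have he : (if ((Fin.rev j : Fin n) : ℕ) < r then 1 else 0)
        + (n - 1 - ((Fin.rev j : Fin n) : ℕ)) = hfun s (j : ℕ) := by
      rw [hfun, hrev]
      split_ifs <;> omega
    rw [he]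
  -- reverse the columns of the denominator matrix
  have hMden : ((Matrix.of fun i j : Fin n =>
        (RatFunc.X : RatFunc ℚ) ^ ((i : ℕ) * q ^ (n - 1 - (j : ℕ)))).submatrix id ⇑σ)
      = Matrix.of fun i j : Fin n =>
          (RatFunc.X : RatFunc ℚ) ^ ((i : ℕ) * q ^ hfun n (j : ℕ)) := by
    ext i j
    simp only [Matrix.submatrix_apply, Matrix.of_apply, id, hσdef, Fin.revPerm_apply]
    have hj : (j : ℕ) < n := j.isLt
    have hrev : ((Fin.rev j : Fin n) : ℕ) = n - ((j : ℕ) + 1) := Fin.val_rev j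
    have he : n - 1 - ((Fin.rev j : Fin n) : ℕ) = hfun n (j : ℕ) := by
      rw [hfun, if_pos hj, hrev]
      omega
    rw [he]
  have key1 := Matrix.det_permute' σ (Matrix.of fun i j : Fin n =>
        (RatFunc.X : RatFunc ℚ) ^
          ((i : ℕ) * q ^ ((if (j : ℕ) < r then 1 else 0) + (n - 1 - (j : ℕ)))))
  have key2 := Matrix.det_permute' σ (Matrix.of fun i j : Fin n =>
        (RatFunc.X : RatFunc ℚ) ^ ((i : ℕ) * q ^ (n - 1 - (j : ℕ))))
  rw [hMnum] at key1
  rw [hMden] at key2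
  have hεne : ((Equiv.Perm.sign σ : ℤ) : RatFunc ℚ) ≠ 0 := by
    rcases Int.units_eq_one_or (Equiv.Perm.sign σ) with h | h <;> rw [h] <;> norm_num
  have hratio : Matrix.det (Matrix.of fun i j : Fin n =>
        (RatFunc.X : RatFunc ℚ) ^
          ((i : ℕ) * q ^ ((if (j : ℕ) < r then 1 else 0) + (n - 1 - (j : ℕ)))))
      / Matrix.det (Matrix.of fun i j : Fin n =>
        (RatFunc.X : RatFunc ℚ) ^ ((i : ℕ) * q ^ (n - 1 - (j : ℕ))))
      = Matrix.det (Matrix.of fun i j : Fin n =>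
          (RatFunc.X : RatFunc ℚ) ^ ((i : ℕ) * q ^ hfun s (j : ℕ)))
        / Matrix.det (Matrix.of fun i j : Fin n =>
          (RatFunc.X : RatFunc ℚ) ^ ((i : ℕ) * q ^ hfun n (j : ℕ))) := by
    rw [key1, key2]
    exact (mul_div_mul_left _ _ hεne).symm
  rw [hratio, det_eq q n (hfun s), det_eq q n (hfun n)]
  -- simplify hfun n inside the denominator product
  have hden2 : (∏ i ∈ range n, ∏ j ∈ Ioo i n,
        ((RatFunc.X : K) ^ q ^ hfun n j - RatFunc.X ^ q ^ hfun n i))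
      = ∏ i ∈ range n, ∏ j ∈ Ioo i n, ((RatFunc.X : K) ^ q ^ j - RatFunc.X ^ q ^ i) := by
    refine Finset.prod_congr rfl fun i hi => Finset.prod_congr rfl fun j hj => ?_
    rw [Finset.mem_range] at hi
    rw [Finset.mem_Ioo] at hj
    simp only [hfun]
    rw [if_pos hi, if_pos hj.2]
  rw [hden2]
  -- rewrite the first RHS product
  have hR1 : (∏ i ∈ Finset.range s,
        (1 - (RatFunc.X : RatFunc ℚ) ^ (q ^ n - q ^ i)) / (1 - RatFunc.X ^ (q ^ s - q ^ i)))
      = ∏ i ∈ range s, ((RatFunc.X : K) ^ q ^ n - RatFunc.X ^ q ^ i)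
          / ((RatFunc.X : K) ^ q ^ s - RatFunc.X ^ q ^ i) := by
    refine Finset.prod_congr rfl fun i hi => ?_
    rw [Finset.mem_range] at hi
    exact factor_eq q n s i hq hi (by omega)
  rw [hR1, Finset.prod_div_distrib, Finset.prod_div_distrib, div_mul_div_comm]
  -- nonvanishing facts
  have hWid : (∏ i ∈ range n, ∏ j ∈ Ioo i n,
      ((RatFunc.X : K) ^ q ^ j - RatFunc.X ^ q ^ i)) ≠ 0 := by
    rw [Finset.prod_ne_zero_iff]
    intro i _
    rw [Finset.prod_ne_zero_iff]
    intro j hj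
    rw [Finset.mem_Ioo] at hj
    exact X_sub_ne (fun hc => by
      have := Nat.pow_right_injective hq hc; omega)
  have hDs : (∏ i ∈ range s, ((RatFunc.X : K) ^ q ^ s - RatFunc.X ^ q ^ i)) ≠ 0 := by
    rw [Finset.prod_ne_zero_iff]
    intro i hi
    rw [Finset.mem_range] at hi
    exact X_sub_ne (fun hc => by
      have := Nat.pow_right_injective hq hc; omega)
  have hD2 : (∏ i ∈ range r,
      ((RatFunc.X : K) ^ q ^ (s + i + 1) - RatFunc.X ^ q ^ s)) ≠ 0 := by
    rw [Finset.prod_ne_zero_iff]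
    intro i _
    exact X_sub_ne (fun hc => by
      have := Nat.pow_right_injective hq hc; omega)
  rw [div_eq_div_iff hWid (mul_ne_zero hDs hD2)]
  linear_combination core q n r s hr hs


end
end

section
/- For m, k ≥ 0 and n ≥ k, the principal specializations of Macdonald's Schur analogues for hook and near-hook shapes satisfy S_{(m,1^k)}(1,t,...,t^n) + S_{(m+1,1^{k-1})}(1,t,...,t^{n-1}) = H_m(1,t,...,t^n) · E_k(1,t,...,t^{n-1}). -/
noncomputable section

/-- The principal specialization `S_λ(1, t, …, t^{N-1})` of Macdonald's 7th-variation Schur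
function, via the Vandermonde product formula
`∏_{0 ≤ i < j ≤ N-1} (t^{q^{λ_{N-j}+j}} - t^{q^{λ_{N-i}+i}})/(t^{q^j} - t^{q^i})`,
where `lam` is the (1-indexed) sequence of parts of `λ`. -/
def Sspec (q N : ℕ) (lam : ℕ → ℕ) (t : RatFunc ℚ) : RatFunc ℚ :=
  ∏ j ∈ Finset.range N, ∏ i ∈ Finset.range j,
    (t ^ q ^ (lam (N - j) + j) - t ^ q ^ (lam (N - i) + i)) / (t ^ q ^ j - t ^ q ^ i)

/-- The hook partition `(m, 1^k)`, as a 1-indexed sequence of parts. -/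
def hookLam (m k : ℕ) : ℕ → ℕ := fun i => if i = 1 then m else if i ≤ k + 1 then 1 else 0

open Finset

open Finset

noncomputable def uu (q r : ℕ) : RatFunc ℚ := RatFunc.X ^ q ^ r

noncomputable def VDF (q N : ℕ) (e : ℕ → ℕ) : RatFunc ℚ :=
  ∏ j ∈ Finset.range N, ∏ i ∈ Finset.range j, (uu q (e j) - uu q (e i))

lemma VDF_succ (q N : ℕ) (e : ℕ → ℕ) :
    VDF q (N+1) e = VDF q N e * ∏ i ∈ Finset.range N, (uu q (e N) - uu q (e i)) :=
  Finset.prod_range_succ _ _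

lemma VDF_congr (q N : ℕ) (e e' : ℕ → ℕ) (h : ∀ j < N, e j = e' j) :
    VDF q N e = VDF q N e' := by
  unfold VDF
  refine Finset.prod_congr rfl fun j hj => Finset.prod_congr rfl fun i hi => ?_
  rw [h j (Finset.mem_range.mp hj),
    h i (lt_trans (Finset.mem_range.mp hi) (Finset.mem_range.mp hj))]

lemma X_pow_sub_ne (a b : ℕ) (h : a ≠ b) :
    (RatFunc.X : RatFunc ℚ) ^ a - RatFunc.X ^ b ≠ 0 := by
  rw [sub_ne_zero]
  intro he
  apply h
  rw [← RatFunc.algebraMap_X (K := ℚ), ← map_pow, ← map_pow] at he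
  have h2 := IsFractionRing.injective (Polynomial ℚ) (RatFunc ℚ) he
  have h3 := congrArg Polynomial.natDegree h2
  simpa using h3

lemma uu_sub_ne (q a b : ℕ) (hq : 2 ≤ q) (h : a ≠ b) : uu q a - uu q b ≠ 0 := by
  apply X_pow_sub_ne
  exact fun hc => h (Nat.pow_right_injective hq hc)

lemma VDF_id_ne (q N : ℕ) (hq : 2 ≤ q) : VDF q N id ≠ 0 := by
  unfold VDF
  rw [Finset.prod_ne_zero_iff]
  intro j hj
  rw [Finset.prod_ne_zero_iff]
  intro i hi
  exact uu_sub_ne q j i hq (by have := Finset.mem_range.mp hi; omega)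

lemma Sspec_eq (q N : ℕ) (lam : ℕ → ℕ) :
    Sspec q N lam RatFunc.X = VDF q N (fun j => lam (N - j) + j) / VDF q N id := by
  unfold Sspec VDF uu
  simp only [Finset.prod_div_distrib, id]
def e0fun (c : ℕ) : ℕ → ℕ := fun j => if j < c then j else j + 1

lemma prod_split (c k : ℕ) (f : ℕ → RatFunc ℚ) :
    ∏ i ∈ Finset.range (c+k+1), f i
      = f c * ∏ i ∈ Finset.range (c+k), f (e0fun c i) := by
  simp only [e0fun]
  rw [show c+k+1 = c+(k+1) by ring, Finset.prod_range_add, Finset.prod_range_succ',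
    Finset.prod_range_add (fun i => f (if i < c then i else i+1)) c k]
  have h1 : ∏ i ∈ Finset.range c, f (if i < c then i else i + 1)
      = ∏ i ∈ Finset.range c, f i :=
    Finset.prod_congr rfl fun i hi => by rw [if_pos (Finset.mem_range.mp hi)]
  have h2 : ∏ i ∈ Finset.range k, f (c + (i+1))
      = ∏ i ∈ Finset.range k, f (if c + i < c then c+i else c+i+1) :=
    Finset.prod_congr rfl fun i hi => by rw [if_neg (by omega), show c+(i+1) = c+i+1 by ring]
  rw [h1, h2, Nat.add_zero]
  ring

/-- For `m ≥ 0`, `k+1 ≥ 1` and `n ≥ k+1`, the hook principal specializations satisfy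
`S_{(m,1^{k+1})}(1,…,t^n) + S_{(m+1,1^k)}(1,…,t^{n-1}) = H_m(1,…,t^n) · E_{k+1}(1,…,t^{n-1})`,
where `H_m = S_{(m)}` and `E_{k+1} = S_{(1^{k+1})}`. -/
theorem hook_specialization_recurrence (q m k n : ℕ) (hq : 2 ≤ q) (hn : k + 1 ≤ n) :
    Sspec q (n + 1) (hookLam m (k + 1)) RatFunc.X + Sspec q n (hookLam (m + 1) k) RatFunc.X
      = Sspec q (n + 1) (hookLam m 0) RatFunc.X * Sspec q n (hookLam 1 k) RatFunc.X := by
  obtain ⟨c, rfl⟩ : ∃ c, n = c + k + 1 := ⟨n - (k + 1), by omega⟩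
  have hnum1 : VDF q (c+k+1) (fun j => if j < c+k then e0fun c j else m+(c+k+1))
      = VDF q (c+k) (e0fun c)
        * ∏ i ∈ Finset.range (c+k), (uu q (m+(c+k+1)) - uu q (e0fun c i)) := by
    rw [show c+k+1 = (c+k)+1 by ring, VDF_succ]
    congr 1
    · exact VDF_congr _ _ _ _ fun j hj => by rw [if_pos hj]
    · refine Finset.prod_congr rfl fun i hi => ?_
      rw [if_neg (lt_irrefl _), if_pos (Finset.mem_range.mp hi)]
  have hnumE : VDF q (c+k+1) (e0fun c)
      = VDF q (c+k) (e0fun c)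
        * ∏ i ∈ Finset.range (c+k), (uu q (c+k+1) - uu q (e0fun c i)) := by
    rw [show c+k+1 = (c+k)+1 by ring, VDF_succ]
    congr 1
    rw [show e0fun c (c+k) = c+k+1 by simp only [e0fun]; rw [if_neg (by omega)]]
  have SA : Sspec q (c+k+1+1) (hookLam m (k+1)) RatFunc.X
      = (VDF q (c+k) (e0fun c)
          * (∏ i ∈ Finset.range (c+k), (uu q (c+k+1) - uu q (e0fun c i)))
          * ((∏ i ∈ Finset.range (c+k), (uu q (m+(c+k+1)) - uu q (e0fun c i)))
             * (uu q (m+(c+k+1)) - uu q (c+k+1))))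
        / (VDF q (c+k+1) id
           * ((uu q (c+k+1) - uu q c)
              * ∏ i ∈ Finset.range (c+k), (uu q (c+k+1) - uu q (e0fun c i)))) := by
    rw [Sspec_eq]
    congr 1
    · rw [VDF_congr q (c+k+1+1) _
        (fun j => if j < c+k+1 then e0fun c j else m+(c+k+1))
        (by intro j hj; simp only [hookLam, e0fun]; split_ifs <;> omega)]
      rw [VDF_succ]
      congr 1
      · rw [VDF_congr q (c+k+1) _ (e0fun c) (fun j hj => by rw [if_pos hj]), hnumE]
      · rw [if_neg (lt_irrefl _)]
        have : ∀ i ∈ Finset.range (c+k+1),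
            (uu q (m+(c+k+1)) - uu q (if i < c+k+1 then e0fun c i else m+(c+k+1)))
              = uu q (m+(c+k+1)) - uu q (e0fun c i) :=
          fun i hi => by rw [if_pos (Finset.mem_range.mp hi)]
        rw [Finset.prod_congr rfl this, show c+k+1 = (c+k)+1 by ring,
          Finset.prod_range_succ,
          show e0fun c (c+k) = c+k+1 by simp only [e0fun]; rw [if_neg (by omega)]]
    · rw [VDF_succ]
      have : ∀ i ∈ Finset.range (c+k+1),
          (uu q (id (c+k+1)) - uu q (id i)) = uu q (c+k+1) - uu q i :=
        fun i hi => rfl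
      rw [Finset.prod_congr rfl this, prod_split c k (fun i => uu q (c+k+1) - uu q i)]
  have SB : Sspec q (c+k+1) (hookLam (m+1) k) RatFunc.X
      = (VDF q (c+k) (e0fun c)
          * ∏ i ∈ Finset.range (c+k), (uu q (m+(c+k+1)) - uu q (e0fun c i)))
        / VDF q (c+k+1) id := by
    rw [Sspec_eq]
    congr 1
    rw [VDF_congr q (c+k+1) _
      (fun j => if j < c+k then e0fun c j else m+(c+k+1))
      (by intro j hj; simp only [hookLam, e0fun]; split_ifs <;> omega)]
    exact hnum1
  have SH : Sspec q (c+k+1+1) (hookLam m 0) RatFunc.X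
      = (VDF q (c+k+1) id
          * ((uu q (m+(c+k+1)) - uu q c)
             * ∏ i ∈ Finset.range (c+k), (uu q (m+(c+k+1)) - uu q (e0fun c i))))
        / (VDF q (c+k+1) id
           * ((uu q (c+k+1) - uu q c)
              * ∏ i ∈ Finset.range (c+k), (uu q (c+k+1) - uu q (e0fun c i)))) := by
    rw [Sspec_eq]
    congr 1
    · rw [VDF_congr q (c+k+1+1) _
        (fun j => if j < c+k+1 then j else m+(c+k+1))
        (by intro j hj; simp only [hookLam]; split_ifs <;> omega)]
      rw [VDF_succ]
      congr 1
      · exact VDF_congr _ _ _ id fun j hj => by rw [if_pos hj]; rfl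
      · rw [if_neg (lt_irrefl _)]
        have : ∀ i ∈ Finset.range (c+k+1),
            (uu q (m+(c+k+1)) - uu q (if i < c+k+1 then i else m+(c+k+1)))
              = uu q (m+(c+k+1)) - uu q i :=
          fun i hi => by rw [if_pos (Finset.mem_range.mp hi)]
        rw [Finset.prod_congr rfl this,
          prod_split c k (fun i => uu q (m+(c+k+1)) - uu q i)]
    · rw [VDF_succ]
      have : ∀ i ∈ Finset.range (c+k+1),
          (uu q (id (c+k+1)) - uu q (id i)) = uu q (c+k+1) - uu q i :=
        fun i hi => rfl
      rw [Finset.prod_congr rfl this, prod_split c k (fun i => uu q (c+k+1) - uu q i)]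
  have SE : Sspec q (c+k+1) (hookLam 1 k) RatFunc.X
      = (VDF q (c+k) (e0fun c)
          * ∏ i ∈ Finset.range (c+k), (uu q (c+k+1) - uu q (e0fun c i)))
        / VDF q (c+k+1) id := by
    rw [Sspec_eq]
    congr 1
    rw [VDF_congr q (c+k+1) _ (e0fun c)
      (by intro j hj; simp only [hookLam, e0fun]; split_ifs <;> omega)]
    exact hnumE
  rw [SA, SB, SH, SE]
  have hDn : VDF q (c+k+1) id ≠ 0 := VDF_id_ne _ _ hq
  have hW : uu q (c+k+1) - uu q c ≠ 0 := uu_sub_ne q _ _ hq (by omega)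
  have hQ : (∏ i ∈ Finset.range (c+k), (uu q (c+k+1) - uu q (e0fun c i))) ≠ 0 := by
    rw [Finset.prod_ne_zero_iff]
    intro i hi
    refine uu_sub_ne q _ _ hq ?_
    have := Finset.mem_range.mp hi
    simp only [e0fun]; split_ifs <;> omega
  have key : uu q (m+(c+k+1)) - uu q c
      = (uu q (m+(c+k+1)) - uu q (c+k+1)) + (uu q (c+k+1) - uu q c) :=
    (sub_add_sub_cancel _ _ _).symm
  rw [key]
  field_simp
end
end
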